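/- A family of operators admitting a positive definite fixed point of the adjoint transfer map can be similarity-transformed into a trace-preserving (Kraus-complete) family. Precisely: let ι be a finite index type, B : ι → Matrix (Fin r) (Fin r) ℂ, and let σ be a positive definite Hermitian r×r complex matrix satisfying Σ_{i ∈ ι} B_iᴴ ⬝ σ ⬝ B_i = σ. Define B'_i = σ^{1/2} ⬝ B_i ⬝ σ^{-1/2}, where σ^{1/2} is the positive semidefinite square root of σ and σ^{-1/2} its inverse. Then Σ_{i ∈ ι} B'_iᴴ ⬝ B'_i = 1. -/

import Mathlib

open Matrix BigOperators ComplexOrder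

noncomputable def Matrix.PosSemidef.sqrt {n : Type*} [Fintype n] [DecidableEq n]
    {A : Matrix n n ℂ} (hA : A.PosSemidef) : Matrix n n ℂ :=
  hA.1.eigenvectorUnitary.1 * diagonal ((↑) ∘ (√·) ∘ hA.1.eigenvalues) *
    (star hA.1.eigenvectorUnitary : Matrix n n ℂ)

theorem Matrix.PosSemidef.sqrt_conjTranspose_self {n : Type*} [Fintype n] [DecidableEq n]
    {A : Matrix n n ℂ} (hA : A.PosSemidef) : (hA.sqrt)ᴴ = hA.sqrt := by
  unfold Matrix.PosSemidef.sqrt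
  simp only [conjTranspose_mul, diagonal_conjTranspose, mul_assoc]
  congr 2
  · ext i; simp
  · simp

theorem Matrix.PosSemidef.sqrt_mul_self' {n : Type*} [Fintype n] [DecidableEq n]
    {A : Matrix n n ℂ} (hA : A.PosSemidef) : hA.sqrt * hA.sqrt = A := by
  unfold Matrix.PosSemidef.sqrt
  conv_rhs => rw [hA.1.spectral_theorem, Unitary.conjStarAlgAut_apply]
  have hu : (star hA.1.eigenvectorUnitary : Matrix n n ℂ) * hA.1.eigenvectorUnitary.1 = 1 :=
    Unitary.star_mul_self_of_mem hA.1.eigenvectorUnitary.2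
  calc _ = hA.1.eigenvectorUnitary.1 * (diagonal ((↑) ∘ (√·) ∘ hA.1.eigenvalues) *
        ((star hA.1.eigenvectorUnitary : Matrix n n ℂ) * hA.1.eigenvectorUnitary.1) *
        diagonal ((↑) ∘ (√·) ∘ hA.1.eigenvalues)) *
        (star hA.1.eigenvectorUnitary : Matrix n n ℂ) := by simp only [mul_assoc]
    _ = _ := by
      rw [hu, mul_one, diagonal_mul_diagonal]
      congr 3
      ext i
      simp only [Function.comp_apply]
      rw [← Complex.ofReal_mul, Real.mul_self_sqrt (hA.eigenvalues_nonneg i)]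
      rfl

/-- A family of operators admitting a positive definite fixed point of the adjoint transfer
map can be similarity-transformed into a trace-preserving (Kraus-complete) family: if
`Σ_i B_iᴴ ⬝ σ ⬝ B_i = σ` for a positive definite Hermitian `σ`, then the matrices
`B'_i = σ^{1/2} ⬝ B_i ⬝ σ^{-1/2}` satisfy the Kraus completeness relation `Σ_i B'_iᴴ ⬝ B'_i = 1`,
where `σ^{1/2}` is the positive semidefinite square root of `σ`. -/
theorem similarity_transform_trace_preserving {r : ℕ} {ι : Type*} [Fintype ι]
    (B : ι → Matrix (Fin r) (Fin r) ℂ)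
    (σ : Matrix (Fin r) (Fin r) ℂ) (hσ : σ.PosDef)
    (hfix : ∑ i : ι, (B i)ᴴ * σ * B i = σ) :
    ∑ i : ι,
        (hσ.posSemidef.sqrt * B i * (hσ.posSemidef.sqrt)⁻¹)ᴴ *
          (hσ.posSemidef.sqrt * B i * (hσ.posSemidef.sqrt)⁻¹) = 1 := by
  set S := hσ.posSemidef.sqrt with hS
  have hherm : Sᴴ = S := hσ.posSemidef.sqrt_conjTranspose_self
  have hmul : S * S = σ := hσ.posSemidef.sqrt_mul_self'
  have hdet : IsUnit S.det := by
    have hσdet : IsUnit σ.det := hσ.det_pos.ne'.isUnit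
    rw [← hmul, Matrix.det_mul] at hσdet
    exact (IsUnit.mul_iff.mp hσdet).1
  have hSinvH : (S⁻¹)ᴴ = S⁻¹ := by rw [Matrix.conjTranspose_nonsing_inv, hherm]
  have key : ∀ i, (S * B i * S⁻¹)ᴴ * (S * B i * S⁻¹)
      = S⁻¹ * ((B i)ᴴ * σ * B i) * S⁻¹ := by
    intro i
    simp only [Matrix.conjTranspose_mul, hSinvH, hherm, ← hmul]
    noncomm_ring
  calc ∑ i : ι, (S * B i * S⁻¹)ᴴ * (S * B i * S⁻¹)
      = ∑ i : ι, S⁻¹ * ((B i)ᴴ * σ * B i) * S⁻¹ := by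
        exact Finset.sum_congr rfl fun i _ => key i
    _ = S⁻¹ * (∑ i : ι, (B i)ᴴ * σ * B i) * S⁻¹ := by
        rw [Finset.mul_sum, Finset.sum_mul]
    _ = S⁻¹ * σ * S⁻¹ := by rw [hfix]
    _ = 1 := by
        rw [← hmul, ← mul_assoc, mul_assoc S⁻¹ S S, ← mul_assoc S⁻¹ S,
          Matrix.nonsing_inv_mul S hdet, one_mul, Matrix.mul_nonsing_inv S hdet]
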